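/- The implicit embedded method of H-LDIRK2(2,2,2) is A-stable but not L-stable: with A = [[γ,0],[1−2γ,γ]], γ = 1 − √2/2, and embedded weights b̂ = (3/10, 7/10), for every z ∈ ℂ with Re z ≤ 0 the matrix I − zA is invertible and the embedded stability function R̂(z) = 1 + z·b̂ᵀ(I − zA)⁻¹𝟙 satisfies |R̂(z)| ≤ 1; moreover b̂ᵀA⁻¹𝟙 ≠ 1, so R̂(z) does not tend to 0 as |z| → ∞. -/

import Mathlib

set_option maxHeartbeats 1000000

open Matrix

lemma matshape (z w : ℂ) :
    (1 - z • ((!![w, 0; 1 - 2*w, w] : Matrix (Fin 2) (Fin 2) ℂ))) =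
      !![1 - z*w, 0; -(z*(1-2*w)), 1 - z*w] := by
  ext i j
  fin_cases i <;> fin_cases j <;> simp [Matrix.one_apply]

lemma isunit_aux (z w : ℂ) (hd : 1 - z*w ≠ 0) :
    IsUnit (1 - z • ((!![w, 0; 1 - 2*w, w] : Matrix (Fin 2) (Fin 2) ℂ))) := by
  rw [matshape, Matrix.isUnit_iff_isUnit_det, Matrix.det_fin_two_of]
  simpa using mul_ne_zero hd hd

lemma invvec (z w : ℂ) (hd : 1 - z*w ≠ 0) :
    ((1 - z • ((!![w, 0; 1 - 2*w, w] : Matrix (Fin 2) (Fin 2) ℂ)))⁻¹ *ᵥ 1) =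
      ![(1-z*w)⁻¹, (z*(1-2*w) + (1-z*w))/(1-z*w)^2] := by
  have hu := isunit_aux z w hd
  have hdet : IsUnit (1 - z • ((!![w, 0; 1 - 2*w, w] : Matrix (Fin 2) (Fin 2) ℂ))).det :=
    (Matrix.isUnit_iff_isUnit_det _).mp hu
  have key : (1 - z • ((!![w, 0; 1 - 2*w, w] : Matrix (Fin 2) (Fin 2) ℂ))) *ᵥ
      ![(1-z*w)⁻¹, (z*(1-2*w) + (1-z*w))/(1-z*w)^2] = 1 := by
    rw [matshape]
    funext i
    fin_cases i <;>
      simp [Matrix.mulVec, dotProduct, Fin.sum_univ_two] <;>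
      field_simp <;> ring
  calc (1 - z • ((!![w, 0; 1 - 2*w, w] : Matrix (Fin 2) (Fin 2) ℂ)))⁻¹ *ᵥ 1
      = (1 - z • ((!![w, 0; 1 - 2*w, w] : Matrix (Fin 2) (Fin 2) ℂ)))⁻¹ *ᵥ
        ((1 - z • ((!![w, 0; 1 - 2*w, w] : Matrix (Fin 2) (Fin 2) ℂ))) *ᵥ
          ![(1-z*w)⁻¹, (z*(1-2*w) + (1-z*w))/(1-z*w)^2]) := by rw [key]
    _ = _ := by rw [Matrix.mulVec_mulVec, Matrix.nonsing_inv_mul _ hdet, Matrix.one_mulVec]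

lemma formula (z w : ℂ) (hd : 1 - z*w ≠ 0) :
    1 + z * ((fun i => ((![3/10, 7/10] : Fin 2 → ℝ) i : ℂ)) ⬝ᵥ
        ((1 - z • ((!![w, 0; 1 - 2*w, w] : Matrix (Fin 2) (Fin 2) ℂ)))⁻¹ *ᵥ 1)) =
      (1 + (1 - 2*w)*z + (w^2 - w + (7/10)*(1 - 2*w))*z^2) / (1 - z*w)^2 := by
  rw [invvec z w hd]
  simp [dotProduct, Fin.sum_univ_two]
  field_simp
  ring

lemma sqrt2_ub : Real.sqrt 2 ≤ 413/292 := by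
  rw [show (413/292:ℝ) = Real.sqrt ((413/292)^2) from (Real.sqrt_sq (by norm_num)).symm]
  exact Real.sqrt_le_sqrt (by norm_num)

lemma sqrt2_lb : (1.41:ℝ) ≤ Real.sqrt 2 := by
  rw [show (1.41:ℝ) = Real.sqrt (1.41^2) from (Real.sqrt_sq (by norm_num)).symm]
  exact Real.sqrt_le_sqrt (by norm_num)

lemma key_ineq (s x y : ℝ) (hs : s^2 = 2) (h1 : 1 ≤ s) (h2 : s ≤ 413/292) (hx : x ≤ 0) :
    (1 + (1-2*(1-s/2))*x + ((1-s/2)^2 - (1-s/2) + 7/10*(1-2*(1-s/2)))*(x^2-y^2))^2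
      + ((1-2*(1-s/2))*y + ((1-s/2)^2 - (1-s/2) + 7/10*(1-2*(1-s/2)))*(2*(x*y)))^2
    ≤ ((1 - (1-s/2)*x)^2 + ((1-s/2)*y)^2)^2 := by
  have hred : ((1 - (1-s/2)*x)^2 + ((1-s/2)*y)^2)^2
      - ((1 + (1-2*(1-s/2))*x + ((1-s/2)^2 - (1-s/2) + 7/10*(1-2*(1-s/2)))*(x^2-y^2))^2
        + ((1-2*(1-s/2))*y + ((1-s/2)^2 - (1-s/2) + 7/10*(1-2*(1-s/2)))*(2*(x*y)))^2)
      = (2/5)*(s-1)*y^2 + ((413-292*s)/100)*y^4 + 2*(-x) + ((56-39*s)/5)*(-x)*y^2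
        + ((32-22*s)/5)*x^2 + ((413-292*s)/50)*x^2*y^2 + ((56-39*s)/5)*(-x)*x^2
        + ((413-292*s)/100)*x^4 := by
    linear_combination (181/100*y^4 - 29/10*x*y^2 + 181/50*x^2*y^2 - 29/10*x^3 + 181/100*x^4
      + s*(-3/5*y^4 - 6/5*x^2*y^2 - 3/5*x^4)) * hs
  have hA : 0 ≤ s - 1 := by linarith
  have hB : 0 ≤ 413 - 292*s := by linarith
  have hC : 0 ≤ 56 - 39*s := by linarith
  have hD : 0 ≤ 32 - 22*s := by linarith
  have hx' : 0 ≤ -x := by linarith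
  nlinarith [mul_nonneg hA (sq_nonneg y), mul_nonneg hB (sq_nonneg (y*y)), hx',
    mul_nonneg (mul_nonneg hx' hC) (sq_nonneg y), mul_nonneg hD (sq_nonneg x),
    mul_nonneg hB (sq_nonneg (x*y)), mul_nonneg (mul_nonneg hx' hC) (sq_nonneg x),
    mul_nonneg hB (sq_nonneg (x*x)), hred]

lemma re_aux (a c : ℝ) (z : ℂ) :
    ((1:ℂ) + (a:ℂ)*z + (c:ℂ)*z^2).re = 1 + a*z.re + c*(z.re^2 - z.im^2) := by
  simp only [pow_two, Complex.add_re, Complex.one_re, Complex.mul_re, Complex.mul_im,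
    Complex.ofReal_re, Complex.ofReal_im]
  ring

lemma im_aux (a c : ℝ) (z : ℂ) :
    ((1:ℂ) + (a:ℂ)*z + (c:ℂ)*z^2).im = a*z.im + c*(2*(z.re*z.im)) := by
  simp only [pow_two, Complex.add_im, Complex.one_im, Complex.mul_re, Complex.mul_im,
    Complex.ofReal_re, Complex.ofReal_im]
  ring

theorem stmt_12 :
    let g : ℝ := 1 - Real.sqrt 2 / 2
    let A : Matrix (Fin 2) (Fin 2) ℝ := !![g, 0; 1 - 2*g, g]
    let bhat : Fin 2 → ℝ := ![3/10, 7/10]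
    let AC : Matrix (Fin 2) (Fin 2) ℂ := A.map Complex.ofReal
    let bC : Fin 2 → ℂ := fun i => (bhat i : ℂ)
    let Rhat : ℂ → ℂ := fun z => 1 + z * (bC ⬝ᵥ ((1 - z • AC)⁻¹ *ᵥ 1))
    (∀ z : ℂ, z.re ≤ 0 → IsUnit (1 - z • AC) ∧ ‖Rhat z‖ ≤ 1) ∧
      bhat ⬝ᵥ (A⁻¹ *ᵥ 1) ≠ 1 ∧
      ¬ Filter.Tendsto Rhat (Filter.comap (fun w : ℂ => ‖w‖) Filter.atTop) (nhds 0) := by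
  intro g A bhat AC bC Rhat
  have hs : Real.sqrt 2 ^ 2 = 2 := Real.sq_sqrt (by norm_num)
  have hub := sqrt2_ub
  have hlb := sqrt2_lb
  have hg : g = 1 - Real.sqrt 2 / 2 := rfl
  have hgpos : 0 < g := by rw [hg]; nlinarith
  have hAC : AC = !![((g:ℝ):ℂ), 0; 1 - 2*((g:ℝ):ℂ), ((g:ℝ):ℂ)] := by
    ext i j
    fin_cases i <;> fin_cases j <;> simp [AC, A]
  refine ⟨?_, ?_, ?_⟩
  · -- A-stability
    intro z hz
    have hdre : ((1:ℂ) - z * ((g:ℝ):ℂ)).re = 1 - z.re * g := by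
      simp [Complex.sub_re, Complex.mul_re]
    have hd : (1:ℂ) - z * ((g:ℝ):ℂ) ≠ 0 := by
      intro h
      rw [h] at hdre
      simp at hdre
      nlinarith [mul_nonpos_of_nonpos_of_nonneg hz hgpos.le]
    constructor
    · rw [hAC]; exact isunit_aux z _ hd
    · simp only [Rhat, bC, bhat]
      rw [hAC, formula z _ hd, norm_div, norm_pow,
        div_le_one (pow_pos (norm_pos_iff.mpr hd) 2)]
      set N : ℂ := 1 + (1 - 2*((g:ℝ):ℂ))*z
          + (((g:ℝ):ℂ)^2 - ((g:ℝ):ℂ) + (7/10)*(1 - 2*((g:ℝ):ℂ)))*z^2 with hN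
      have hN2 : N = (1:ℂ) + ((1-2*g : ℝ):ℂ)*z + ((g^2 - g + 7/10*(1-2*g) : ℝ):ℂ)*z^2 := by
        rw [hN]; push_cast; ring
      have hNre : N.re = 1 + (1-2*g)*z.re + (g^2 - g + 7/10*(1-2*g))*(z.re^2 - z.im^2) := by
        rw [hN2]; exact re_aux _ _ z
      have hNim : N.im = (1-2*g)*z.im + (g^2 - g + 7/10*(1-2*g))*(2*(z.re*z.im)) := by
        rw [hN2]; exact im_aux _ _ z
      have hdim : ((1:ℂ) - z * ((g:ℝ):ℂ)).im = -(z.im * g) := by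
        simp [Complex.sub_im, Complex.mul_im]
      rw [Complex.norm_def, Complex.sq_norm]
      rw [show Complex.normSq ((1:ℂ) - z * ((g:ℝ):ℂ))
          = Real.sqrt ((Complex.normSq ((1:ℂ) - z * ((g:ℝ):ℂ)))^2)
        from (Real.sqrt_sq (Complex.normSq_nonneg _)).symm]
      apply Real.sqrt_le_sqrt
      rw [Complex.normSq_apply, Complex.normSq_apply, hNre, hNim, hdre, hdim]
      have key := key_ineq (Real.sqrt 2) z.re z.im hs (by linarith) hub hz
      rw [hg]
      nlinarith [key]
  · -- not L-stable: bhat ⬝ᵥ A⁻¹ 𝟙 ≠ 1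
    have hgne : g ≠ 0 := hgpos.ne'
    have hdet : IsUnit A.det := by
      simp only [A, Matrix.det_fin_two_of, isUnit_iff_ne_zero]
      intro h
      exact hgne (mul_self_eq_zero.mp (by linarith [h]))
    have key : A *ᵥ ![1/g, (3*g-1)/g^2] = 1 := by
      funext i
      fin_cases i <;>
        simp [A, Matrix.mulVec, dotProduct, Fin.sum_univ_two] <;>
        field_simp <;> ring
    have hinv : A⁻¹ *ᵥ 1 = ![1/g, (3*g-1)/g^2] := by
      calc A⁻¹ *ᵥ 1 = A⁻¹ *ᵥ (A *ᵥ ![1/g, (3*g-1)/g^2]) := by rw [key]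
        _ = _ := by rw [Matrix.mulVec_mulVec, Matrix.nonsing_inv_mul _ hdet, Matrix.one_mulVec]
    rw [hinv]
    simp only [bhat, dotProduct, Fin.sum_univ_two]
    intro h
    simp [Matrix.cons_val_zero, Matrix.cons_val_one] at h
    field_simp at h
    rw [hg] at h
    nlinarith [hs, hlb, h]
  · -- R̂ does not tend to 0 at infinity
    intro h
    have htend : Filter.Tendsto (fun n : ℕ => (-(n:ℝ) : ℂ)) Filter.atTop
        (Filter.comap (fun w : ℂ => ‖w‖) Filter.atTop) := by
      rw [Filter.tendsto_comap_iff]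
      have : ((fun w : ℂ => ‖w‖) ∘ fun n : ℕ => (-(n:ℝ) : ℂ)) = fun n : ℕ => (n:ℝ) := by
        funext n; simp
      rw [this]
      exact tendsto_natCast_atTop_atTop
    have h2 : Filter.Tendsto (fun n : ℕ => ‖Rhat (-(n:ℝ) : ℂ)‖)
        Filter.atTop (nhds 0) := by
      have := (continuous_norm.tendsto 0).comp (h.comp htend)
      simpa [Function.comp_def] using this
    have h3 : ∀ᶠ n : ℕ in Filter.atTop, ‖Rhat (-(n:ℝ) : ℂ)‖ < 1/2 :=
      h2.eventually (Filter.Tendsto.eventually_lt_const (by norm_num) Filter.tendsto_id)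
    obtain ⟨n, hn1, hn2⟩ := (h3.and (Filter.eventually_ge_atTop 100)).exists
    set x : ℝ := (n : ℝ) with hxdef
    have hx : (100:ℝ) ≤ x := by rw [hxdef]; exact_mod_cast hn2
    have hdr : (0:ℝ) < 1 + g*x := by nlinarith
    have hdc : (1:ℂ) - (-(x:ℝ):ℂ)*((g:ℝ):ℂ) ≠ 0 := by
      rw [show (1:ℂ) - (-(x:ℝ):ℂ)*((g:ℝ):ℂ) = ((1 + g*x : ℝ):ℂ) by push_cast; ring]
      exact_mod_cast hdr.ne'
    have hval : Rhat (-(x:ℝ):ℂ) =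
        (((1 - (1-2*g)*x + (g^2-g+7/10*(1-2*g))*x^2)/((1+g*x)^2) : ℝ) : ℂ) := by
      simp only [Rhat, bC, bhat]
      rw [hAC, formula _ _ hdc]
      rw [show (1 + (1-2*((g:ℝ):ℂ))*(-(x:ℝ):ℂ)
          + (((g:ℝ):ℂ)^2 - ((g:ℝ):ℂ) + (7/10)*(1-2*((g:ℝ):ℂ)))*(-(x:ℝ):ℂ)^2)
          = ((1 - (1-2*g)*x + (g^2-g+7/10*(1-2*g))*x^2 : ℝ):ℂ) by push_cast; ring]
      rw [show ((1:ℂ) - (-(x:ℝ):ℂ)*((g:ℝ):ℂ))^2 = (((1+g*x)^2 : ℝ):ℂ) by push_cast; ring]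
      rw [← Complex.ofReal_div]
    rw [hval, Complex.norm_real, Real.norm_eq_abs] at hn1
    have hQ : (0:ℝ) < (1+g*x)^2 := by positivity
    have hP : 1/2 ≤ (1 - (1-2*g)*x + (g^2-g+7/10*(1-2*g))*x^2)/((1+g*x)^2) := by
      rw [le_div_iff₀ hQ]
      rw [hg]
      nlinarith [hs, hlb, hub, hx, mul_le_mul_of_nonneg_left hx (by linarith : (0:ℝ) ≤ x),
        sq_nonneg (x - 100)]
    have := le_abs_self ((1 - (1-2*g)*x + (g^2-g+7/10*(1-2*g))*x^2)/((1+g*x)^2))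
    linarith
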